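/- Let A be a finite nonempty index set, M > 0, and for each a ∈ A let t_a : ℝ → ℝ be nondecreasing on [0,M] with t_a(0) > 0. Suppose u : A → ℝ satisfies u_a ≥ 0 for all a, Σ_{a∈A} u_a = M, and there exists ρ ∈ ℝ such that u_a = ρ·t_a(u_a) for all a ∈ A. Then for every a ∈ A, u_a ≥ M·t_a(0)/(Σ_{a'∈A} t_{a'}(M)); in particular, u_a ≥ M·(min_{a'} t_{a'}(0))/(|A|·max_{a'} t_{a'}(M)) > 0. -/

import Mathlib

/-- Every equilibrium mass vector on a directed-cycle network (constant flow
`u_a = ρ·t_a(u_a)` with total mass `M`) is bounded away from zero: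
`u_a ≥ M·t_a(0)/Σ_{a'} t_{a'}(M) ≥ M·(min t(0))/(|A|·max t(M)) > 0`. -/
theorem cycle_equilibrium_mass_lower_bound
    {A : Type*} [Fintype A] [Nonempty A] (M : ℝ) (hM : 0 < M)
    (t : A → ℝ → ℝ)
    (hmono : ∀ a, MonotoneOn (t a) (Set.Icc 0 M))
    (hpos : ∀ a, 0 < t a 0)
    (u : A → ℝ) (hu : ∀ a, 0 ≤ u a) (hsum : ∑ a, u a = M)
    (ρ : ℝ) (hρ : ∀ a, u a = ρ * t a (u a)) :
    ∀ a, M * t a 0 / (∑ a', t a' M) ≤ u a ∧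
      M * (⨅ a', t a' 0) / ((Fintype.card A : ℝ) * ⨆ a', t a' M) ≤ u a ∧
      0 < u a := by
  have huM : ∀ a, u a ≤ M := by
    intro a
    rw [← hsum]
    exact Finset.single_le_sum (fun b _ => hu b) (Finset.mem_univ a)
  have hmem : ∀ a, u a ∈ Set.Icc (0 : ℝ) M := fun a => ⟨hu a, huM a⟩
  have h0mem : (0 : ℝ) ∈ Set.Icc (0 : ℝ) M := ⟨le_refl _, hM.le⟩
  have hMmem : M ∈ Set.Icc (0 : ℝ) M := ⟨hM.le, le_refl _⟩
  have htu_pos : ∀ a, 0 < t a (u a) := fun a =>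
    lt_of_lt_of_le (hpos a) (hmono a h0mem (hmem a) (hu a))
  have htuM : ∀ a, t a (u a) ≤ t a M := fun a => hmono a (hmem a) hMmem (huM a)
  have htM_pos : ∀ a, 0 < t a M := fun a => lt_of_lt_of_le (htu_pos a) (htuM a)
  set S : ℝ := ∑ a', t a' (u a') with hS
  set S' : ℝ := ∑ a', t a' M with hS'
  have hSpos : 0 < S := Finset.sum_pos (fun a _ => htu_pos a) Finset.univ_nonempty
  have hS'pos : 0 < S' := Finset.sum_pos (fun a _ => htM_pos a) Finset.univ_nonempty
  have hSS' : S ≤ S' := Finset.sum_le_sum (fun a _ => htuM a)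
  have hMS : M = ρ * S := by
    rw [← hsum, hS, Finset.mul_sum]
    exact Finset.sum_congr rfl (fun a _ => hρ a)
  have hρval : ρ = M / S := by field_simp [hMS]; exact hMS.symm
  have hρpos : 0 < ρ := by rw [hρval]; positivity
  -- first bound
  have hbound1 : ∀ a, M * t a 0 / S' ≤ u a := by
    intro a
    rw [hρ a, hρval, div_mul_eq_mul_div]
    apply div_le_div₀ (mul_pos hM (htu_pos a)).le _ hSpos hSS'
    exact mul_le_mul_of_nonneg_left (hmono a h0mem (hmem a) (hu a)) hM.le
  intro a
  refine ⟨hbound1 a, ?_, ?_⟩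
  · refine le_trans ?_ (hbound1 a)
    have hinf : (⨅ a', t a' 0) ≤ t a 0 :=
      ciInf_le (Set.Finite.bddBelow (Set.finite_range _)) a
    have hsup : ∀ a', t a' M ≤ ⨆ a', t a' M := fun a' =>
      le_ciSup (f := fun a' => t a' M) (Set.Finite.bddAbove (Set.finite_range _)) a'
    have hsuppos : 0 < ⨆ a', t a' M :=
      lt_of_lt_of_le (htM_pos (Classical.arbitrary A)) (hsup _)
    have hcard : 0 < (Fintype.card A : ℝ) := by
      exact_mod_cast Fintype.card_pos
    have hS'le : S' ≤ (Fintype.card A : ℝ) * ⨆ a', t a' M := by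
      calc S' ≤ ∑ _a' : A, ⨆ a', t a' M :=
            Finset.sum_le_sum (fun a' _ => hsup a')
        _ = (Fintype.card A : ℝ) * ⨆ a', t a' M := by
            rw [Finset.sum_const, nsmul_eq_mul, Finset.card_univ]
    apply div_le_div₀ (mul_pos hM (hpos a)).le _ (by positivity) hS'le
    exact mul_le_mul_of_nonneg_left hinf hM.le
  · rw [hρ a]
    exact mul_pos hρpos (htu_pos a)
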